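/- Let ρ: ℝ³ → ℝ≥0 be of the form ρ = Σ_{j=1}^m n_j ρ_j with n_j > 0 and each √ρ_j ∈ H¹(ℝ³). Then √ρ ∈ H¹(ℝ³) and ∫_{ℝ³} |∇√ρ|² dx ≤ Σ_{j=1}^m n_j ∫_{ℝ³} |∇√ρ_j|² dx. (Convexity of ρ ↦ ∫|∇√ρ|² under convex combinations / superadditivity of the Fisher information.) -/

import Mathlib

open MeasureTheory Finset

lemma fisher_pointwise {E : Type*} [NormedAddCommGroup E] [NormedSpace ℝ E]
    {m : ℕ} (g : Fin m → E → ℝ) (c : Fin m → ℝ) (hc : ∀ j, 0 ≤ c j)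
    (hg0 : ∀ j x, 0 ≤ g j x) (hdiff : ∀ j, Differentiable ℝ (g j)) (x : E) :
    ‖fderiv ℝ (fun y => Real.sqrt (∑ j, c j * (g j y) ^ 2)) x‖ ^ 2 ≤
      ∑ j, c j * ‖fderiv ℝ (g j) x‖ ^ 2 := by
  set S : E → ℝ := fun y => ∑ j, c j * (g j y) ^ 2 with hS
  have hS0 : ∀ y, 0 ≤ S y := fun y =>
    Finset.sum_nonneg fun j _ => mul_nonneg (hc j) (sq_nonneg _)
  have hRHS : 0 ≤ ∑ j, c j * ‖fderiv ℝ (g j) x‖ ^ 2 :=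
    Finset.sum_nonneg fun j _ => mul_nonneg (hc j) (sq_nonneg _)
  by_cases hx : S x = 0
  · have hmin : IsLocalMin (fun y => Real.sqrt (S y)) x := by
      apply Filter.Eventually.of_forall
      intro y
      simp only [hx, Real.sqrt_zero]
      exact Real.sqrt_nonneg _
    rw [hmin.fderiv_eq_zero]
    simpa using hRHS
  · have hxpos : 0 < S x := lt_of_le_of_ne (hS0 x) (Ne.symm hx)
    have hsq : 0 < Real.sqrt (S x) := Real.sqrt_pos.mpr hxpos
    set D : Fin m → E →L[ℝ] ℝ := fun j => fderiv ℝ (g j) x with hD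
    have hSderiv : HasFDerivAt S (∑ j, (c j * (2 * g j x)) • D j) x := by
      apply HasFDerivAt.fun_sum
      intro j _
      have h0 := (hdiff j x).hasFDerivAt
      have h1 : HasFDerivAt (fun y => (g j y) ^ 2)
          (g j x • D j + g j x • D j) x := by
        simpa [pow_two] using h0.fun_mul h0
      have heq : (c j * (2 * g j x)) • D j = c j • (g j x • D j + g j x • D j) := by
        module
      exact heq ▸ h1.const_mul (c j)
    have hfder : HasFDerivAt (fun y => Real.sqrt (S y))
        ((1 / (2 * Real.sqrt (S x))) • ∑ j, (c j * (2 * g j x)) • D j) x :=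
      hSderiv.sqrt hx
    rw [hfder.fderiv]
    set A : ℝ := ∑ j, c j * g j x * ‖D j‖ with hA
    have hA0 : 0 ≤ A :=
      Finset.sum_nonneg fun j _ => mul_nonneg (mul_nonneg (hc j) (hg0 j x)) (norm_nonneg _)
    have hnorm : ‖(1 / (2 * Real.sqrt (S x))) • ∑ j, (c j * (2 * g j x)) • D j‖ ≤
        A / Real.sqrt (S x) := by
      rw [norm_smul (1 / (2 * Real.sqrt (S x))) (∑ j, (c j * (2 * g j x)) • D j)]
      have h1 : ‖∑ j, (c j * (2 * g j x)) • D j‖ ≤ 2 * A := by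
        calc ‖∑ j, (c j * (2 * g j x)) • D j‖ ≤ ∑ j, ‖(c j * (2 * g j x)) • D j‖ :=
              norm_sum_le _ _
          _ = ∑ j, (c j * (2 * g j x)) * ‖D j‖ := by
              apply Finset.sum_congr rfl
              intro j _
              rw [norm_smul (c j * (2 * g j x)) (D j), Real.norm_eq_abs, abs_of_nonneg]
              exact mul_nonneg (hc j) (mul_nonneg zero_le_two (hg0 j x))
          _ = 2 * A := by rw [hA, Finset.mul_sum]; apply Finset.sum_congr rfl; intros; ring
      have h2 : ‖(1 : ℝ) / (2 * Real.sqrt (S x))‖ = 1 / (2 * Real.sqrt (S x)) := by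
        rw [Real.norm_eq_abs, abs_of_nonneg]; positivity
      rw [h2]
      rw [div_mul_eq_mul_div, one_mul, div_le_div_iff₀ (by positivity) hsq]
      calc ‖∑ j, (c j * (2 * g j x)) • D j‖ * Real.sqrt (S x)
          ≤ (2 * A) * Real.sqrt (S x) := by
            apply mul_le_mul_of_nonneg_right h1 (Real.sqrt_nonneg _)
        _ = A * (2 * Real.sqrt (S x)) := by ring
    have hCS : A ^ 2 ≤ S x * ∑ j, c j * ‖D j‖ ^ 2 := by
      have := Finset.sum_mul_sq_le_sq_mul_sq Finset.univ
        (fun j => Real.sqrt (c j) * g j x) (fun j => Real.sqrt (c j) * ‖D j‖)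
      have e1 : ∑ j, (Real.sqrt (c j) * g j x) * (Real.sqrt (c j) * ‖D j‖) = A := by
        rw [hA]; apply Finset.sum_congr rfl; intro j _
        rw [show (Real.sqrt (c j) * g j x) * (Real.sqrt (c j) * ‖D j‖)
            = (Real.sqrt (c j) * Real.sqrt (c j)) * (g j x * ‖D j‖) by ring,
          Real.mul_self_sqrt (hc j)]; ring
      have e2 : ∑ j, (Real.sqrt (c j) * g j x) ^ 2 = S x := by
        apply Finset.sum_congr rfl; intro j _
        rw [mul_pow, Real.sq_sqrt (hc j)]
      have e3 : ∑ j, (Real.sqrt (c j) * ‖D j‖) ^ 2 = ∑ j, c j * ‖D j‖ ^ 2 := by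
        apply Finset.sum_congr rfl; intro j _
        rw [mul_pow, Real.sq_sqrt (hc j)]
      rwa [e1, e2, e3] at this
    calc ‖(1 / (2 * Real.sqrt (S x))) • ∑ j, (c j * (2 * g j x)) • D j‖ ^ 2
        ≤ (A / Real.sqrt (S x)) ^ 2 := by
          apply pow_le_pow_left₀ (norm_nonneg _) hnorm
      _ = A ^ 2 / S x := by
          rw [div_pow, Real.sq_sqrt (hS0 x)]
      _ ≤ ∑ j, c j * ‖D j‖ ^ 2 := by
          rw [div_le_iff₀ hxpos]
          linarith [hCS]

/-- Convexity of the Fisher information: if `ρ = ∑ c_j ρ_j` with `c_j > 0` and each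
`√ρ_j ∈ H¹(ℝ³)`, then `√ρ ∈ H¹(ℝ³)` and `∫ |∇√ρ|² ≤ ∑ c_j ∫ |∇√ρ_j|²`. -/
theorem stmt13 (m : ℕ) (hm : 1 ≤ m)
    (ρ : Fin m → EuclideanSpace ℝ (Fin 3) → ℝ) (c : Fin m → ℝ)
    (hc : ∀ j, 0 < c j) (hρ0 : ∀ j x, 0 ≤ ρ j x)
    (hdiff : ∀ j, Differentiable ℝ (fun x => Real.sqrt (ρ j x)))
    (hL2 : ∀ j, MemLp (fun x => Real.sqrt (ρ j x)) 2
      (volume : Measure (EuclideanSpace ℝ (Fin 3))))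
    (hG : ∀ j, MemLp (fun x => fderiv ℝ (fun y => Real.sqrt (ρ j y)) x) 2
      (volume : Measure (EuclideanSpace ℝ (Fin 3)))) :
    MemLp (fun x => Real.sqrt (∑ j, c j * ρ j x)) 2
      (volume : Measure (EuclideanSpace ℝ (Fin 3))) ∧
    MemLp (fun x => fderiv ℝ (fun y => Real.sqrt (∑ j, c j * ρ j y)) x) 2
      (volume : Measure (EuclideanSpace ℝ (Fin 3))) ∧
    ∫ x : EuclideanSpace ℝ (Fin 3),
        ‖fderiv ℝ (fun y => Real.sqrt (∑ j, c j * ρ j y)) x‖ ^ 2 ≤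
      ∑ j, c j * ∫ x : EuclideanSpace ℝ (Fin 3),
        ‖fderiv ℝ (fun y => Real.sqrt (ρ j y)) x‖ ^ 2 := by
  set D : Fin m → EuclideanSpace ℝ (Fin 3) → (EuclideanSpace ℝ (Fin 3) →L[ℝ] ℝ) :=
    fun j x => fderiv ℝ (fun y => Real.sqrt (ρ j y)) x with hDdef
  -- the key pointwise bound
  have key : ∀ x : EuclideanSpace ℝ (Fin 3), ‖fderiv ℝ (fun y => Real.sqrt (∑ j, c j * ρ j y)) x‖ ^ 2 ≤
      ∑ j, c j * ‖D j x‖ ^ 2 := by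
    intro x
    have h := fisher_pointwise (fun j y => Real.sqrt (ρ j y)) c (fun j => (hc j).le)
      (fun j y => Real.sqrt_nonneg _) hdiff x
    have hfn : (fun y : EuclideanSpace ℝ (Fin 3) => Real.sqrt (∑ j, c j * (Real.sqrt (ρ j y)) ^ 2)) =
        (fun y : EuclideanSpace ℝ (Fin 3) => Real.sqrt (∑ j, c j * ρ j y)) := by
      funext y
      congr 1
      exact Finset.sum_congr rfl fun j _ => by rw [Real.sq_sqrt (hρ0 j y)]
    rwa [hfn] at h
  -- continuity of the densities
  have hρcont : ∀ j, Continuous (ρ j) := by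
    intro j
    have h1 : Continuous (fun y : EuclideanSpace ℝ (Fin 3) => (Real.sqrt (ρ j y)) ^ 2) := (hdiff j).continuous.pow 2
    have h2 : (fun y : EuclideanSpace ℝ (Fin 3) => (Real.sqrt (ρ j y)) ^ 2) = ρ j :=
      funext fun y => Real.sq_sqrt (hρ0 j y)
    rwa [h2] at h1
  have hSnn : ∀ x : EuclideanSpace ℝ (Fin 3), 0 ≤ ∑ j, c j * ρ j x := fun x =>
    Finset.sum_nonneg fun j _ => mul_nonneg (hc j).le (hρ0 j x)
  have hfcont : Continuous (fun x : EuclideanSpace ℝ (Fin 3) => Real.sqrt (∑ j, c j * ρ j x)) :=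
    Real.continuous_sqrt.comp (continuous_finset_sum _ fun j _ =>
      continuous_const.mul (hρcont j))
  -- integrability of the densities
  have hρint : ∀ j, Integrable (ρ j) (volume : Measure (EuclideanSpace ℝ (Fin 3))) := by
    intro j
    have h1 := (hL2 j).integrable_sq
    have h2 : (fun y : EuclideanSpace ℝ (Fin 3) => (Real.sqrt (ρ j y)) ^ 2) = ρ j :=
      funext fun y => Real.sq_sqrt (hρ0 j y)
    rwa [h2] at h1
  -- first part : √ρ ∈ L²
  have mem1 : MemLp (fun x : EuclideanSpace ℝ (Fin 3) => Real.sqrt (∑ j, c j * ρ j x)) 2 volume := by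
    rw [memLp_two_iff_integrable_sq hfcont.aestronglyMeasurable]
    have h1 : Integrable (fun x : EuclideanSpace ℝ (Fin 3) => ∑ j, c j * ρ j x) volume :=
      integrable_finset_sum _ fun j _ => (hρint j).const_mul (c j)
    have h2 : (fun x : EuclideanSpace ℝ (Fin 3) => (Real.sqrt (∑ j, c j * ρ j x)) ^ 2) =
        (fun x : EuclideanSpace ℝ (Fin 3) => ∑ j, c j * ρ j x) := funext fun x => Real.sq_sqrt (hSnn x)
    rwa [h2]
  -- the dominating function for the gradient
  have hBnn : ∀ x : EuclideanSpace ℝ (Fin 3), 0 ≤ ∑ j, c j * ‖D j x‖ ^ 2 := fun x =>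
    Finset.sum_nonneg fun j _ => mul_nonneg (hc j).le (sq_nonneg _)
  have hDmeas : ∀ j, Measurable (D j) := fun j => measurable_fderiv ℝ _
  have hhmeas : Measurable (fun x : EuclideanSpace ℝ (Fin 3) => Real.sqrt (∑ j, c j * ‖D j x‖ ^ 2)) := by
    apply Real.continuous_sqrt.measurable.comp
    exact Finset.measurable_sum _ fun j _ =>
      (measurable_const.mul ((hDmeas j).norm.pow_const 2))
  have hDint : ∀ j, Integrable (fun x : EuclideanSpace ℝ (Fin 3) => ‖D j x‖ ^ 2) volume := fun j =>
    (memLp_two_iff_integrable_sq_norm (hG j).aestronglyMeasurable).1 (hG j)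
  have hBint : Integrable (fun x : EuclideanSpace ℝ (Fin 3) => ∑ j, c j * ‖D j x‖ ^ 2) volume :=
    integrable_finset_sum _ fun j _ => (hDint j).const_mul (c j)
  have memh : MemLp (fun x : EuclideanSpace ℝ (Fin 3) => Real.sqrt (∑ j, c j * ‖D j x‖ ^ 2)) 2 volume := by
    rw [memLp_two_iff_integrable_sq hhmeas.aestronglyMeasurable]
    have h2 : (fun x : EuclideanSpace ℝ (Fin 3) => (Real.sqrt (∑ j, c j * ‖D j x‖ ^ 2)) ^ 2) =
        (fun x : EuclideanSpace ℝ (Fin 3) => ∑ j, c j * ‖D j x‖ ^ 2) := funext fun x => Real.sq_sqrt (hBnn x)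
    rwa [h2]
  -- second part : ∇√ρ ∈ L²
  have hfdmeas : AEStronglyMeasurable
      (fun x : EuclideanSpace ℝ (Fin 3) => fderiv ℝ (fun y => Real.sqrt (∑ j, c j * ρ j y)) x) volume :=
    (measurable_fderiv ℝ _).aestronglyMeasurable
  have mem2 : MemLp (fun x : EuclideanSpace ℝ (Fin 3) => fderiv ℝ (fun y => Real.sqrt (∑ j, c j * ρ j y)) x)
      2 volume := by
    apply MemLp.of_le memh hfdmeas
    apply Filter.Eventually.of_forall
    intro x
    have h1 : ‖fderiv ℝ (fun y => Real.sqrt (∑ j, c j * ρ j y)) x‖ ≤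
        Real.sqrt (∑ j, c j * ‖D j x‖ ^ 2) :=
      (Real.le_sqrt (norm_nonneg _) (hBnn x)).2 (key x)
    calc ‖fderiv ℝ (fun y => Real.sqrt (∑ j, c j * ρ j y)) x‖
        ≤ Real.sqrt (∑ j, c j * ‖D j x‖ ^ 2) := h1
      _ = ‖Real.sqrt (∑ j, c j * ‖D j x‖ ^ 2)‖ := by
          rw [Real.norm_eq_abs, abs_of_nonneg (Real.sqrt_nonneg _)]
  refine ⟨mem1, mem2, ?_⟩
  have hInt1 : Integrable
      (fun x : EuclideanSpace ℝ (Fin 3) => ‖fderiv ℝ (fun y => Real.sqrt (∑ j, c j * ρ j y)) x‖ ^ 2) volume :=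
    (memLp_two_iff_integrable_sq_norm hfdmeas).1 mem2
  calc ∫ x : EuclideanSpace ℝ (Fin 3), ‖fderiv ℝ (fun y => Real.sqrt (∑ j, c j * ρ j y)) x‖ ^ 2
      ≤ ∫ x : EuclideanSpace ℝ (Fin 3), ∑ j, c j * ‖D j x‖ ^ 2 := integral_mono hInt1 hBint key
    _ = ∑ j, ∫ x : EuclideanSpace ℝ (Fin 3), c j * ‖D j x‖ ^ 2 :=
        integral_finset_sum _ fun j _ => (hDint j).const_mul (c j)
    _ = ∑ j, c j * ∫ x : EuclideanSpace ℝ (Fin 3), ‖D j x‖ ^ 2 :=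
        Finset.sum_congr rfl fun j _ => integral_const_mul _ _
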